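/- Let G be a connected simple graph with a vertex w such that G − w is a forest. Then the edge set of G can be partitioned into two sets E_1, E_2 such that in the subgraph H_i induced by E_i (for i = 1, 2), every vertex of H_i other than w has odd degree. -/

import Mathlib

open SimpleGraph Set

private noncomputable def cnt {V : Type*} (E : Set (Sym2 V)) (v : V) : ℕ :=
  {e : Sym2 V | e ∈ E ∧ v ∈ e}.ncard

private def Req : Option Bool → ℕ → ℕ → Prop
  | none, n₁, n₂ => (n₁ = 0 ∨ Odd n₁) ∧ (n₂ = 0 ∨ Odd n₂)
  | some true, n₁, n₂ => Even n₁ ∧ (n₂ = 0 ∨ Odd n₂)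
  | some false, n₁, n₂ => Even n₂ ∧ (n₁ = 0 ∨ Odd n₁)

private lemma walk_support_cases {α : Type*} {K : SimpleGraph α} {x y : α}
    (p : K.Walk x y) {c : α} (h : c ∈ p.support) : c = x ∨ ∃ z, K.Adj z c := by
  induction p with
  | nil => simp at h; exact Or.inl h
  | cons hadj q ih =>
    rw [SimpleGraph.Walk.support_cons, List.mem_cons] at h
    rcases h with h | h
    · exact Or.inl h
    · rcases ih h with rfl | hz
      · exact Or.inr ⟨_, hadj⟩
      · exact Or.inr hz

private lemma lemTerm {V : Type*} [Fintype V] (G : SimpleGraph V) (s : V → Option Bool) (w : V)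
    (hE : G.edgeSet = ∅) (hs : ∀ v, s v = none) :
    ∃ E₁ E₂ : Set (Sym2 V), E₁ ∪ E₂ = G.edgeSet ∧ Disjoint E₁ E₂ ∧
      ∀ v : V, v ≠ w → Req (s v) (cnt E₁ v) (cnt E₂ v) := by
  refine ⟨∅, ∅, by simp [hE], by simp, ?_⟩
  intro v _
  have h0 : cnt (∅ : Set (Sym2 V)) v = 0 := by simp [cnt]
  rw [hs v, h0]
  exact ⟨Or.inl rfl, Or.inl rfl⟩

private lemma lemC {V : Type*} [Fintype V] (w : V) (n : ℕ) :
    ∀ (G : SimpleGraph V) (s : V → Option Bool),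
    2 * G.edgeSet.ncard + {v : V | s v ≠ none}.ncard ≤ n →
    (G.induce {v : V | v ≠ w}).IsAcyclic →
    s w = none →
    (∀ a b : V, (ha : a ≠ w) → (hb : b ≠ w) → a ≠ b → s a ≠ none → s b ≠ none →
      ¬ (G.induce {v : V | v ≠ w}).Reachable ⟨a, ha⟩ ⟨b, hb⟩) →
    ∃ E₁ E₂ : Set (Sym2 V), E₁ ∪ E₂ = G.edgeSet ∧ Disjoint E₁ E₂ ∧
      ∀ v : V, v ≠ w → Req (s v) (cnt E₁ v) (cnt E₂ v) := by
  induction n with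
  | zero =>
    intro G s hmeas hforest hsw hreach
    have hE : G.edgeSet = ∅ := by
      rw [← Set.ncard_eq_zero (Set.toFinite _)]; omega
    have hs0 : {v : V | s v ≠ none} = ∅ := by
      rw [← Set.ncard_eq_zero (Set.toFinite _)]; omega
    refine lemTerm G s w hE (fun v => ?_)
    by_contra hv
    exact absurd hs0 (Set.Nonempty.ne_empty ⟨v, hv⟩)
  | succ n IH =>
    intro G s hmeas hforest hsw hreach
    classical
    by_cases hterm : G.edgeSet = ∅ ∧ ∀ v, s v = none
    · exact lemTerm G s w hterm.1 hterm.2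
    -- choose the vertex u to process
    have hu : ∃ u : V, u ≠ w ∧
        (s u ≠ none ∨ ((∀ v, s v = none) ∧ ∃ p, G.Adj u p)) := by
      by_cases hall : ∀ v, s v = none
      · have hne : G.edgeSet ≠ ∅ := fun h => hterm ⟨h, hall⟩
        obtain ⟨e, he⟩ := Set.nonempty_iff_ne_empty.2 hne
        induction e using Sym2.ind with
        | _ x y =>
          rw [SimpleGraph.mem_edgeSet] at he
          by_cases hx : x = w
          · rw [hx] at he
            exact ⟨y, he.ne', Or.inr ⟨hall, w, he.symm⟩⟩
          · exact ⟨x, hx, Or.inr ⟨hall, y, he⟩⟩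
      · push_neg at hall
        obtain ⟨v, hv⟩ := hall
        exact ⟨v, fun h => hv (h ▸ hsw), Or.inl hv⟩
    obtain ⟨u, huw, hcase⟩ := hu
    set A := G.incidenceSet u with hA_def
    set G' := G.deleteEdges A with hG'_def
    have hA_sub : A ⊆ G.edgeSet := G.incidenceSet_subset u
    have hE' : G'.edgeSet = G.edgeSet \ A := G.edgeSet_deleteEdges A
    have hle : G' ≤ G := G.deleteEdges_le A
    set N : Set V := {p : V | G.Adj u p ∧ p ≠ w} with hN_def
    have hmemA : ∀ e ∈ A, u ∈ e := fun e he => he.2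
    -- choose the split of u's incident edges
    obtain ⟨A₁, A₂, hA12, hA12d, hreqA⟩ :
        ∃ A₁ A₂ : Set (Sym2 V), A₁ ∪ A₂ = A ∧ Disjoint A₁ A₂ ∧
          Req (s u) A₁.ncard A₂.ncard := by
      rcases hd : s u with _ | b
      · rcases Nat.even_or_odd A.ncard with hev | hod
        · rcases Set.eq_empty_or_nonempty A with hAe | ⟨e₀, he₀⟩
          · exact ⟨∅, ∅, by simp [hAe], by simp, by simp [Req]⟩
          · refine ⟨{e₀}, A \ {e₀}, Set.union_diff_cancel (by simpa using he₀),
              Set.disjoint_sdiff_right, ?_⟩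
            have h1 : 0 < A.ncard := (Set.ncard_pos (Set.toFinite _)).2 ⟨e₀, he₀⟩
            have h2 : (A \ {e₀}).ncard = A.ncard - 1 :=
              Set.ncard_diff_singleton_of_mem he₀
            rw [Set.ncard_singleton, h2]
            exact ⟨Or.inr odd_one, Or.inr (Nat.Even.sub_odd h1 hev odd_one)⟩
        · exact ⟨A, ∅, by simp, by simp, ⟨Or.inr hod, Or.inl (by simp)⟩⟩
      · cases b
        · rcases Nat.even_or_odd A.ncard with hev | hod
          · exact ⟨∅, A, by simp, by simp, ⟨hev, Or.inl (by simp)⟩⟩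
          · exact ⟨A, ∅, by simp, by simp, ⟨by simp, Or.inr hod⟩⟩
        · rcases Nat.even_or_odd A.ncard with hev | hod
          · exact ⟨A, ∅, by simp, by simp, ⟨hev, Or.inl (by simp)⟩⟩
          · exact ⟨∅, A, by simp, by simp, ⟨by simp, Or.inr hod⟩⟩
    have hA₁A : A₁ ⊆ A := hA12 ▸ Set.subset_union_left
    have hA₂A : A₂ ⊆ A := hA12 ▸ Set.subset_union_right
    -- the new spec function
    set s' : V → Option Bool := fun v =>
      if v = u then none
      else if v ∈ N then some (decide (s(u, v) ∈ A₁))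
      else s v with hs'_def
    have hs'u : s' u = none := by simp [hs'_def]
    have hs'N : ∀ p (hp : p ∈ N), s' p = some (decide (s(u, p) ∈ A₁)) := by
      intro p hp
      have hpu : p ≠ u := hp.1.ne'
      simp [hs'_def, hpu, hp]
    have hs'o : ∀ v, v ≠ u → v ∉ N → s' v = s v := by
      intro v h1 h2; simp [hs'_def, h1, h2]
    have hs'w : s' w = none := by
      rw [hs'o w (Ne.symm huw) (fun h => h.2 rfl), hsw]
    -- measure decreases
    have hmN : N.ncard ≤ A.ncard := by
      have himg : (fun p => s(u, p)) '' N ⊆ A := by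
        rintro e ⟨p, hp, rfl⟩
        exact (G.mk'_mem_incidenceSet_left_iff).2 hp.1
      have hinj : Set.InjOn (fun p => s(u, p)) N := by
        intro p _ q _ h
        exact Sym2.congr_right.1 h
      calc N.ncard = ((fun p => s(u, p)) '' N).ncard := (Set.ncard_image_of_injOn hinj).symm
        _ ≤ A.ncard := Set.ncard_le_ncard himg (Set.toFinite _)
    have hsupp' : {v : V | s' v ≠ none} ⊆ N ∪ ({v : V | s v ≠ none} \ {u}) := by
      intro v hv
      by_cases h1 : v = u
      · exact absurd (h1 ▸ hv) (by simp [hs'u])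
      by_cases h2 : v ∈ N
      · exact Or.inl h2
      · exact Or.inr ⟨by rw [Set.mem_setOf_eq, ← hs'o v h1 h2]; exact hv, h1⟩
    have hcard_supp' : {v : V | s' v ≠ none}.ncard
        ≤ N.ncard + ({v : V | s v ≠ none} \ {u}).ncard :=
      le_trans (Set.ncard_le_ncard hsupp' (Set.toFinite _)) (Set.ncard_union_le _ _)
    have hE'card : G'.edgeSet.ncard = G.edgeSet.ncard - A.ncard := by
      rw [hE']; exact Set.ncard_diff hA_sub (Set.toFinite _)
    have hAle : A.ncard ≤ G.edgeSet.ncard := Set.ncard_le_ncard hA_sub (Set.toFinite _)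
    have hmeas' : 2 * G'.edgeSet.ncard + {v : V | s' v ≠ none}.ncard ≤ n := by
      rcases hcase with hsu | ⟨_, p, hp⟩
      · have humem : u ∈ {v : V | s v ≠ none} := hsu
        have hds : ({v : V | s v ≠ none} \ {u}).ncard + 1 = {v : V | s v ≠ none}.ncard :=
          Set.ncard_diff_singleton_add_one humem (Set.toFinite _)
        omega
      · have h1 : 0 < A.ncard := (Set.ncard_pos (Set.toFinite _)).2
          ⟨s(u, p), (G.mk'_mem_incidenceSet_left_iff).2 hp⟩
        have h2 : ({v : V | s v ≠ none} \ {u}).ncard ≤ {v : V | s v ≠ none}.ncard :=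
          Set.ncard_diff_singleton_le _ _
        omega
    -- acyclicity
    have hile : G'.induce {v : V | v ≠ w} ≤ G.induce {v : V | v ≠ w} :=
      fun a b hab => hle hab
    have hforest' : (G'.induce {v : V | v ≠ w}).IsAcyclic :=
      fun v c hc => hforest (c.mapLe hile) (hc.mapLe hile)
    -- key acyclicity argument: two F-neighbors of u are not reachable after deletion
    have hkey : ∀ p (hp : p ∈ N), ∀ q (hq : q ∈ N), p ≠ q →
        ¬ (G'.induce {v : V | v ≠ w}).Reachable ⟨p, hp.2⟩ ⟨q, hq.2⟩ := by
      intro p hp q hq hpq hr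
      obtain ⟨W'⟩ := hr
      set P' := W'.toPath with hP'
      have hedges : ∀ e, e ∈ P'.val.edges → e ∈ (G.induce {v : V | v ≠ w}).edgeSet :=
        fun e he => SimpleGraph.edgeSet_mono hile (P'.val.edges_subset_edgeSet he)
      set W := P'.val.transfer (G.induce {v : V | v ≠ w}) hedges with hW
      have hWpath : W.IsPath := P'.2.transfer hedges
      have hu_not : (⟨u, huw⟩ : {v : V | v ≠ w}) ∉ W.support := by
        rw [hW, SimpleGraph.Walk.support_transfer]
        intro hmem
        rcases walk_support_cases _ hmem with h | ⟨z, hz⟩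
        · exact hp.1.ne' (congrArg Subtype.val h).symm
        · have hz' : G'.Adj z.val u := hz
          rw [hG'_def, SimpleGraph.deleteEdges_adj] at hz'
          exact hz'.2 ((G.mk'_mem_incidenceSet_right_iff).2 hz'.1)
      have hadj1 : (G.induce {v : V | v ≠ w}).Adj ⟨p, hp.2⟩ ⟨u, huw⟩ := hp.1.symm
      have hadj2 : (G.induce {v : V | v ≠ w}).Adj ⟨u, huw⟩ ⟨q, hq.2⟩ := hq.1
      set Q : (G.induce {v : V | v ≠ w}).Walk ⟨p, hp.2⟩ ⟨q, hq.2⟩ :=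
        SimpleGraph.Walk.cons hadj1 (SimpleGraph.Walk.cons hadj2 SimpleGraph.Walk.nil) with hQ
      have hQpath : Q.IsPath := by
        rw [hQ]
        simp [SimpleGraph.Walk.isPath_def, Subtype.ext_iff, hp.1.ne', hq.1.ne, hpq]
      have heq := hforest.path_unique ⟨W, hWpath⟩ ⟨Q, hQpath⟩
      apply hu_not
      rw [show W = Q from congrArg Subtype.val heq, hQ]
      simp
    -- reachability condition for the new spec
    have hreach' : ∀ a b : V, (ha : a ≠ w) → (hb : b ≠ w) → a ≠ b →
        s' a ≠ none → s' b ≠ none →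
        ¬ (G'.induce {v : V | v ≠ w}).Reachable ⟨a, ha⟩ ⟨b, hb⟩ := by
      intro a b ha hb hab hsa hsb hr
      have hra : (G.induce {v : V | v ≠ w}).Reachable ⟨a, ha⟩ ⟨b, hb⟩ := hr.mono hile
      have hau : a ≠ u := fun h => hsa (h ▸ hs'u)
      have hbu : b ≠ u := fun h => hsb (h ▸ hs'u)
      by_cases hNa : a ∈ N <;> by_cases hNb : b ∈ N
      · exact hkey a hNa b hNb hab hr
      · have hsb' : s b ≠ none := by rwa [hs'o b hbu hNb] at hsb
        have hsu : s u ≠ none := by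
          rcases hcase with h | ⟨hall, _⟩
          · exact h
          · exact absurd (hall b) hsb'
        refine hreach u b huw hb (Ne.symm hbu) hsu hsb' ?_
        exact (SimpleGraph.Adj.reachable
          (show (G.induce {v : V | v ≠ w}).Adj ⟨u, huw⟩ ⟨a, ha⟩ from hNa.1)).trans hra
      · have hsa' : s a ≠ none := by rwa [hs'o a hau hNa] at hsa
        have hsu : s u ≠ none := by
          rcases hcase with h | ⟨hall, _⟩
          · exact h
          · exact absurd (hall a) hsa'
        refine hreach u a huw ha (Ne.symm hau) hsu hsa' ?_
        exact (SimpleGraph.Adj.reachable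
          (show (G.induce {v : V | v ≠ w}).Adj ⟨u, huw⟩ ⟨b, hb⟩ from hNb.1)).trans hra.symm
      · have hsa' : s a ≠ none := by rwa [hs'o a hau hNa] at hsa
        have hsb' : s b ≠ none := by rwa [hs'o b hbu hNb] at hsb
        exact hreach a b ha hb hab hsa' hsb' hra
    obtain ⟨E₁', E₂', hU', hD', hR'⟩ := IH G' s' hmeas' hforest' hs'w hreach'
    have hE₁'sub : E₁' ⊆ G.edgeSet \ A := by
      rw [← hE']; exact Set.Subset.trans Set.subset_union_left hU'.subset
    have hE₂'sub : E₂' ⊆ G.edgeSet \ A := by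
      rw [← hE']; exact Set.Subset.trans Set.subset_union_right hU'.subset
    have dEA : Disjoint (G.edgeSet \ A) A := disjoint_sdiff_left
    have dj1 : Disjoint E₁' A₁ := dEA.mono hE₁'sub hA₁A
    have dj2 : Disjoint E₂' A₂ := dEA.mono hE₂'sub hA₂A
    -- counting helpers
    have cnt_union : ∀ (X Y : Set (Sym2 V)) (v : V), Disjoint X Y →
        cnt (X ∪ Y) v = cnt X v + cnt Y v := by
      intro X Y v hXY
      have hset : {e : Sym2 V | e ∈ X ∪ Y ∧ v ∈ e}
          = {e : Sym2 V | e ∈ X ∧ v ∈ e} ∪ {e : Sym2 V | e ∈ Y ∧ v ∈ e} := by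
        ext e; simp only [Set.mem_setOf_eq, Set.mem_union]; tauto
      unfold cnt
      rw [hset]
      exact Set.ncard_union_eq
        (hXY.mono (fun e he => he.1) (fun e he => he.1)) (Set.toFinite _) (Set.toFinite _)
    have cnt_out : ∀ (X : Set (Sym2 V)) (v : V), (∀ e ∈ X, v ∉ e) → cnt X v = 0 := by
      intro X v h
      have hempty : {e : Sym2 V | e ∈ X ∧ v ∈ e} = ∅ := by
        ext e; simp only [Set.mem_setOf_eq, Set.mem_empty_iff_false, iff_false, not_and]
        exact h e
      simp [cnt, hempty]
    have cnt_all : ∀ (X : Set (Sym2 V)) (v : V), (∀ e ∈ X, v ∈ e) → cnt X v = X.ncard := by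
      intro X v h
      have hXeq : {e : Sym2 V | e ∈ X ∧ v ∈ e} = X := by
        ext e; simp only [Set.mem_setOf_eq, and_iff_left_iff_imp]
        exact h e
      simp [cnt, hXeq]
    have hEno_u : ∀ (X : Set (Sym2 V)), X ⊆ G.edgeSet \ A → ∀ e ∈ X, u ∉ e := by
      intro X hX e he hue
      exact (hX he).2 ⟨(hX he).1, hue⟩
    have cnt_Ap : ∀ (X : Set (Sym2 V)), X ⊆ A → ∀ p, p ≠ u →
        cnt X p = if s(u, p) ∈ X then 1 else 0 := by
      intro X hX p hpu
      have hsub : {e : Sym2 V | e ∈ X ∧ p ∈ e} ⊆ {s(u, p)} := by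
        rintro e ⟨heX, hpe⟩
        have heA := hX heX
        have he : e = s(u, p) := (Sym2.mem_and_mem_iff (Ne.symm hpu)).1 ⟨heA.2, hpe⟩
        simp [he]
      unfold cnt
      by_cases hm : s(u, p) ∈ X
      · have : {e : Sym2 V | e ∈ X ∧ p ∈ e} = {s(u, p)} := by
          refine Set.Subset.antisymm hsub ?_
          rintro e rfl
          exact ⟨hm, Sym2.mem_mk_right u p⟩
        simp [this, hm]
      · have : {e : Sym2 V | e ∈ X ∧ p ∈ e} = ∅ := by
          refine Set.eq_empty_of_subset_empty (fun e he => ?_)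
          have := hsub he
          simp only [Set.mem_singleton_iff] at this
          exact absurd (this ▸ he.1) hm
        simp [this, hm]
    have cnt_Ao : ∀ (X : Set (Sym2 V)), X ⊆ A → ∀ v, v ≠ u → v ∉ N → v ≠ w → cnt X v = 0 := by
      intro X hX v hvu hvN hvw
      apply cnt_out
      intro e heX hve
      have heA := hX heX
      have he : e = s(u, v) := (Sym2.mem_and_mem_iff (Ne.symm hvu)).1 ⟨heA.2, hve⟩
      have hadj : G.Adj u v := G.mem_edgeSet.1 (he ▸ heA.1)
      exact hvN ⟨hadj, hvw⟩
    refine ⟨E₁' ∪ A₁, E₂' ∪ A₂, ?_, ?_, ?_⟩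
    · rw [Set.union_union_union_comm, hU', hA12, hE', Set.diff_union_of_subset hA_sub]
    · apply Disjoint.union_left <;> apply Disjoint.union_right
      · exact hD'
      · exact dEA.mono hE₁'sub hA₂A
      · exact (dEA.mono hE₂'sub hA₁A).symm
      · exact hA12d
    · intro v hvw
      rw [cnt_union _ _ _ dj1, cnt_union _ _ _ dj2]
      by_cases hv : v = u
      · subst hv
        rw [cnt_out E₁' v (hEno_u E₁' hE₁'sub), cnt_out E₂' v (hEno_u E₂' hE₂'sub),
            cnt_all A₁ v (fun e he => hmemA e (hA₁A he)),
            cnt_all A₂ v (fun e he => hmemA e (hA₂A he))]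
        simpa using hreqA
      by_cases hvN : v ∈ N
      · have hsv : s v = none := by
          by_contra hsv
          have hsu : s u ≠ none := by
            rcases hcase with h | ⟨hall, _⟩
            · exact h
            · exact absurd (hall v) hsv
          exact hreach u v huw hvw (Ne.symm hv) hsu hsv
            (SimpleGraph.Adj.reachable
              (show (G.induce {v : V | v ≠ w}).Adj ⟨u, huw⟩ ⟨v, hvw⟩ from hvN.1))
        have hRv := hR' v hvw
        rw [hs'N v hvN] at hRv
        rw [hsv, cnt_Ap A₁ hA₁A v hv, cnt_Ap A₂ hA₂A v hv]
        have hvA : s(u, v) ∈ A := (G.mk'_mem_incidenceSet_left_iff).2 hvN.1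
        by_cases hm : s(u, v) ∈ A₁
        · rw [decide_eq_true hm] at hRv
          obtain ⟨he, ho⟩ := hRv
          have hm2 : s(u, v) ∉ A₂ := Set.disjoint_left.1 hA12d hm
          rw [if_pos hm, if_neg hm2, add_zero]
          exact ⟨Or.inr he.add_one, ho⟩
        · have hm2 : s(u, v) ∈ A₂ := by
            have : s(u, v) ∈ A₁ ∪ A₂ := hA12.symm ▸ hvA
            exact this.resolve_left hm
          rw [decide_eq_false hm] at hRv
          obtain ⟨he, ho⟩ := hRv
          rw [if_neg hm, if_pos hm2, add_zero]
          exact ⟨ho, Or.inr he.add_one⟩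
      · rw [cnt_Ao A₁ hA₁A v hv hvN hvw, cnt_Ao A₂ hA₂A v hv hvN hvw, add_zero, add_zero]
        have hRv := hR' v hvw
        rwa [hs'o v hv hvN] at hRv

theorem stmt14 {V : Type*} [Fintype V] (G : SimpleGraph V)
    (hconn : G.Connected) (w : V)
    (hforest : (G.induce {v : V | v ≠ w}).IsAcyclic) :
    ∃ E₁ E₂ : Set (Sym2 V), E₁ ∪ E₂ = G.edgeSet ∧ Disjoint E₁ E₂ ∧
      (∀ v : V, v ≠ w → {e : Sym2 V | e ∈ E₁ ∧ v ∈ e}.ncard ≠ 0 →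
        Odd {e : Sym2 V | e ∈ E₁ ∧ v ∈ e}.ncard) ∧
      (∀ v : V, v ≠ w → {e : Sym2 V | e ∈ E₂ ∧ v ∈ e}.ncard ≠ 0 →
        Odd {e : Sym2 V | e ∈ E₂ ∧ v ∈ e}.ncard) := by
  obtain ⟨E₁, E₂, hu, hd, hreq⟩ :=
    lemC w (2 * G.edgeSet.ncard) G (fun _ => none)
      (by simp) hforest rfl (by intro a b ha hb hab hsa; simp at hsa)
  refine ⟨E₁, E₂, hu, hd, ?_, ?_⟩ <;> intro v hv hne <;>
    obtain ⟨h1, h2⟩ := hreq v hv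
  · exact h1.resolve_left hne
  · exact h2.resolve_left hne
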